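/- There exists a Borel set A ⊆ ℝ such that A is not both meager and null (i.e., A ∉ 𝒩 ∩ ℳ), but for every closed set C ⊆ ℝ with C \ A both meager and null, the set C itself is both meager and null. -/
import Mathlib

theorem stmt7 : ∃ A : Set ℝ, MeasurableSet A ∧
    ¬ (MeasureTheory.volume A = 0 ∧ IsMeagre A) ∧
    ∀ C : Set ℝ, IsClosed C →
      (MeasureTheory.volume (C \ A) = 0 ∧ IsMeagre (C \ A)) →
      (MeasureTheory.volume C = 0 ∧ IsMeagre C) := by
  refine ⟨{x | Liouville x}, IsGδ.setOf_liouville.measurableSet, ?_, ?_⟩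
  · rintro ⟨-, hm⟩
    have h1 : {x : ℝ | Liouville x} ∈ residual ℝ := eventually_residual_liouville
    have h2 : (∅ : Set ℝ) ∈ residual ℝ := by
      have := Filter.inter_mem h1 hm
      simpa using this
    have := dense_of_mem_residual h2
    simp [dense_iff_closure_eq] at this
    exact (Set.empty_ne_univ this)
  · rintro C hC ⟨hnull, -⟩
    have hCnull : MeasureTheory.volume C = 0 := by
      have : MeasureTheory.volume C ≤ MeasureTheory.volume (C \ {x | Liouville x})
          + MeasureTheory.volume {x | Liouville x} := by
        refine (MeasureTheory.measure_mono ?_).trans (MeasureTheory.measure_union_le _ _)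
        intro x hx
        by_cases h : Liouville x
        · exact Or.inr h
        · exact Or.inl ⟨hx, h⟩
      simpa [hnull, volume_setOf_liouville] using this
    refine ⟨hCnull, ?_⟩
    have hnd : IsNowhereDense C := .of_isClosed_null hC hCnull
    rw [isMeagre_iff_countable_union_isNowhereDense]
    exact ⟨{C}, by simpa using hnd, Set.countable_singleton _, by simp⟩
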